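/- Let P and Q be probability mass functions on a finite set Z, and let A ⊆ Z with P(A) > 0. Then -log Q(A) ≤ (D(P‖Q) + 1) / P(A), where D(P‖Q) denotes the Kullback–Leibler divergence (with the convention D(P‖Q) = ∞ if P is not absolutely continuous with respect to Q, in which case the inequality is trivial). -/

import Mathlib

noncomputable section
open scoped BigOperators
attribute [local instance] Classical.propDecidable

/-- KL divergence (base 2) between two pmfs on a finite set, with the convention that it is
`⊤` (infinity) when `P` is not absolutely continuous with respect to `Q`, and with the
convention `0 · log 0 = 0`. -/
noncomputable def klDiv2 {Z : Type*} [Fintype Z] (P Q : Z → ℝ) : EReal :=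
  if ∀ z, Q z = 0 → P z = 0 then
    (((∑ z, if P z = 0 then 0 else P z * Real.logb 2 (P z / Q z)) : ℝ) : EReal)
  else ⊤

/-- Log-sum inequality (natural log, with the convention that terms with `a z = 0` vanish). -/
theorem logsum_aux {Z : Type*} [Fintype Z] (s : Finset Z) (a b : Z → ℝ)
    (ha : ∀ z ∈ s, 0 ≤ a z) (hb : ∀ z ∈ s, 0 ≤ b z)
    (hac : ∀ z ∈ s, b z = 0 → a z = 0) (hsa : 0 < ∑ z ∈ s, a z) :
    (∑ z ∈ s, a z) * Real.log ((∑ z ∈ s, a z) / (∑ z ∈ s, b z))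
      ≤ ∑ z ∈ s, (if a z = 0 then 0 else a z * Real.log (a z / b z)) := by
  classical
  set sa := ∑ z ∈ s, a z with hsadef
  set sb := ∑ z ∈ s, b z with hsbdef
  have hsb : 0 < sb := by
    rcases (Finset.sum_nonneg fun z hz => hb z hz).lt_or_eq with h | h
    · exact h
    · exfalso
      have hb0 : ∀ z ∈ s, b z = 0 :=
        (Finset.sum_eq_zero_iff_of_nonneg fun z hz => hb z hz).mp h.symm
      exact hsa.ne' (Finset.sum_eq_zero fun z hz => hac z hz (hb0 z hz))
  set c := sa / sb with hc
  have hcpos : 0 < c := div_pos hsa hsb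
  have term : ∀ z ∈ s,
      a z * Real.log c + (a z - b z * c)
        ≤ (if a z = 0 then 0 else a z * Real.log (a z / b z)) := by
    intro z hz
    by_cases h0 : a z = 0
    · simp only [h0, if_true, zero_mul, zero_add, zero_sub, add_zero]
      have := mul_nonneg (hb z hz) hcpos.le
      linarith
    · simp only [h0, if_false]
      have hapos : 0 < a z := lt_of_le_of_ne (ha z hz) (Ne.symm h0)
      have hbpos : 0 < b z := by
        rcases (hb z hz).lt_or_eq with h | h
        · exact h
        · exact absurd (hac z hz h.symm) h0
      have h1 : Real.log (b z * c / a z) ≤ b z * c / a z - 1 :=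
        Real.log_le_sub_one_of_pos (by positivity)
      have h2 : Real.log (b z * c / a z) = Real.log (b z) + Real.log c - Real.log (a z) := by
        rw [Real.log_div (by positivity) hapos.ne', Real.log_mul hbpos.ne' hcpos.ne']
      have h3 : Real.log (a z / b z) = Real.log (a z) - Real.log (b z) :=
        Real.log_div hapos.ne' hbpos.ne'
      have h4 : a z * (b z * c / a z) = b z * c := by field_simp
      nlinarith [mul_le_mul_of_nonneg_left h1 hapos.le]
  have hsum := Finset.sum_le_sum term
  have heq : ∑ z ∈ s, (a z * Real.log c + (a z - b z * c))
      = sa * Real.log c + (sa - sb * c) := by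
    rw [Finset.sum_add_distrib, ← Finset.sum_mul, Finset.sum_sub_distrib, ← Finset.sum_mul]
  have hsbc : sb * c = sa := by rw [hc]; field_simp [hsb.ne']
  rw [heq, hsbc] at hsum
  simpa using hsum

theorem core_aux {Z : Type*} [Fintype Z] (P Q : Z → ℝ)
    (hP0 : ∀ z, 0 ≤ P z) (hP1 : ∑ z, P z = 1)
    (hQ0 : ∀ z, 0 ≤ Q z) (hQ1 : ∑ z, Q z = 1)
    (hac : ∀ z, Q z = 0 → P z = 0)
    (A : Finset Z) (hPA : 0 < ∑ z ∈ A, P z) :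
    (∑ z ∈ A, P z) * (-Real.log (∑ z ∈ A, Q z))
      ≤ (∑ z, if P z = 0 then 0 else P z * Real.log (P z / Q z)) + Real.log 2 := by
  classical
  set p := ∑ z ∈ A, P z with hp
  set q := ∑ z ∈ A, Q z with hq
  have hq0 : 0 < q := by
    rcases (Finset.sum_nonneg fun z _ => hQ0 z).lt_or_eq with h | h
    · exact h
    · exfalso
      have hQz : ∀ z ∈ A, Q z = 0 :=
        (Finset.sum_eq_zero_iff_of_nonneg fun z _ => hQ0 z).mp h.symm
      exact hPA.ne' (Finset.sum_eq_zero fun z hz => hac z (hQz z hz))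
  set p' := ∑ z ∈ Aᶜ, P z with hp'
  set q' := ∑ z ∈ Aᶜ, Q z with hq'
  have hpp' : p + p' = 1 := by rw [hp, hp', Finset.sum_add_sum_compl, hP1]
  have hqq' : q + q' = 1 := by rw [hq, hq', Finset.sum_add_sum_compl, hQ1]
  have hp'0 : 0 ≤ p' := Finset.sum_nonneg fun z _ => hP0 z
  have hq'0 : 0 ≤ q' := Finset.sum_nonneg fun z _ => hQ0 z
  have hsplit : (∑ z, if P z = 0 then 0 else P z * Real.log (P z / Q z))
      = (∑ z ∈ A, if P z = 0 then 0 else P z * Real.log (P z / Q z))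
        + (∑ z ∈ Aᶜ, if P z = 0 then 0 else P z * Real.log (P z / Q z)) :=
    (Finset.sum_add_sum_compl A _).symm
  have hA : p * Real.log (p / q)
      ≤ ∑ z ∈ A, if P z = 0 then 0 else P z * Real.log (P z / Q z) :=
    logsum_aux A P Q (fun z _ => hP0 z) (fun z _ => hQ0 z) (fun z _ h => hac z h) hPA
  have hAc : (1 - p) * Real.log (1 - p)
      ≤ ∑ z ∈ Aᶜ, if P z = 0 then 0 else P z * Real.log (P z / Q z) := by
    have h1p : 1 - p = p' := by linarith
    rw [h1p]
    rcases hp'0.lt_or_eq with hpos | hzero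
    · have hq'pos : 0 < q' := by
        rcases hq'0.lt_or_eq with h | h
        · exact h
        · exfalso
          have hQz : ∀ z ∈ Aᶜ, Q z = 0 :=
            (Finset.sum_eq_zero_iff_of_nonneg fun z _ => hQ0 z).mp h.symm
          exact hpos.ne' (Finset.sum_eq_zero fun z hz => hac z (hQz z hz))
      have h1 := logsum_aux Aᶜ P Q (fun z _ => hP0 z) (fun z _ => hQ0 z)
        (fun z _ h => hac z h) hpos
      have h2 : p' * Real.log p' ≤ p' * Real.log (p' / q') := by
        apply mul_le_mul_of_nonneg_left _ hp'0
        apply Real.log_le_log hpos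
        rw [le_div_iff₀ hq'pos]
        nlinarith
      linarith
    · have hPz : ∀ z ∈ Aᶜ, P z = 0 :=
        (Finset.sum_eq_zero_iff_of_nonneg fun z _ => hP0 z).mp hzero.symm
      have : (∑ z ∈ Aᶜ, if P z = 0 then 0 else P z * Real.log (P z / Q z)) = 0 :=
        Finset.sum_eq_zero fun z hz => by simp [hPz z hz]
      rw [this, ← hzero]
      simp
  have hbe : -(p * Real.log p) - (1 - p) * Real.log (1 - p) ≤ Real.log 2 := by
    have := Real.binEntropy_le_log_two (p := p)
    rw [Real.binEntropy, Real.log_inv, Real.log_inv] at this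
    linarith
  have hlogdiv : Real.log (p / q) = Real.log p - Real.log q :=
    Real.log_div hPA.ne' hq0.ne'
  rw [hsplit]
  nlinarith [hA, hAc, hbe]

/-- For pmfs `P, Q` on a finite set `Z` and `A ⊆ Z` with `P(A) > 0`,
`-log Q(A) ≤ (D(P‖Q) + 1) / P(A)`, stated equivalently as
`P(A) · (-log Q(A)) ≤ D(P‖Q) + 1`. -/
theorem stmt0 {Z : Type*} [Fintype Z] (P Q : Z → ℝ)
    (hP0 : ∀ z, 0 ≤ P z) (hP1 : ∑ z, P z = 1)
    (hQ0 : ∀ z, 0 ≤ Q z) (hQ1 : ∑ z, Q z = 1)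
    (A : Finset Z) (hPA : 0 < ∑ z ∈ A, P z) :
    (((∑ z ∈ A, P z) * (-Real.logb 2 (∑ z ∈ A, Q z)) : ℝ) : EReal)
      ≤ klDiv2 P Q + 1 := by
  by_cases hac : ∀ z, Q z = 0 → P z = 0
  · rw [klDiv2, if_pos hac]
    have hcore := core_aux P Q hP0 hP1 hQ0 hQ1 hac A hPA
    set S := ∑ z, if P z = 0 then (0:ℝ) else P z * Real.logb 2 (P z / Q z) with hS
    have hlog2 : (0:ℝ) < Real.log 2 := Real.log_pos (by norm_num)
    have hSeq : S = (∑ z, if P z = 0 then (0:ℝ) else P z * Real.log (P z / Q z)) / Real.log 2 := by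
      rw [hS, Finset.sum_div]
      refine Finset.sum_congr rfl fun z _ => ?_
      by_cases h0 : P z = 0
      · simp [h0]
      · simp only [h0, if_false, Real.logb, div_eq_mul_inv]
        ring
    have hreal : (∑ z ∈ A, P z) * (-Real.logb 2 (∑ z ∈ A, Q z)) ≤ S + 1 := by
      rw [hSeq, Real.logb]
      have h1 : (∑ z ∈ A, P z) * -(Real.log (∑ z ∈ A, Q z) / Real.log 2)
          = ((∑ z ∈ A, P z) * -Real.log (∑ z ∈ A, Q z)) / Real.log 2 := by ring
      have h2 : (∑ z, if P z = 0 then (0:ℝ) else P z * Real.log (P z / Q z)) / Real.log 2 + 1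
          = ((∑ z, if P z = 0 then (0:ℝ) else P z * Real.log (P z / Q z)) + Real.log 2)
            / Real.log 2 := by field_simp
      rw [h1, h2]
      gcongr
    have : ((S : EReal) + 1) = ((S + 1 : ℝ) : EReal) := by norm_cast
    rw [this]
    exact_mod_cast hreal
  · rw [klDiv2, if_neg hac]
    rw [EReal.top_add_of_ne_bot (by rw [← EReal.coe_one]; exact EReal.coe_ne_bot 1)]
    exact le_top
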